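/- Let p be a prime, k ≥ 2 with k | p−1, ψ a multiplicative character of F_p of order k, and f_k(x) = Σ_{i=1}^{k−1} ψ^i(x). Then |Σ_{x∈F_p} f_k(x)^4| ≤ 3(k−1)^3 p. -/

import Mathlib

open Finset

theorem stmt_8 {p k : ℕ} [Fact p.Prime] (hk : 2 ≤ k) (hkp : k ∣ p - 1)
    (ψ : MulChar (ZMod p) ℂ) (hψ : orderOf ψ = k) :
    ‖∑ x : ZMod p, (∑ i ∈ Finset.Ico 1 k, (ψ ^ i) x) ^ 4‖
      ≤ 3 * ((k : ℝ) - 1) ^ 3 * p := by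
  have hp : 2 ≤ p := (Fact.out : p.Prime).two_le
  set s := Finset.Ico 1 k with hs
  have hcard : s.card = k - 1 := by simp [hs]
  -- character sum evaluation
  have hT : ∀ n : ℕ, ‖∑ x : ZMod p, (ψ ^ n) x‖
      = if k ∣ n then (p : ℝ) - 1 else 0 := by
    intro n
    by_cases h : k ∣ n
    · rw [if_pos h]
      have h1 : ψ ^ n = 1 := orderOf_dvd_iff_pow_eq_one.mp (hψ ▸ h)
      rw [h1, MulChar.sum_one_eq_card_units, ZMod.card_units_eq_totient,
        Nat.totient_prime (Fact.out : p.Prime)]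
      rw [Complex.norm_natCast, Nat.cast_sub (by omega : 1 ≤ p), Nat.cast_one]
    · rw [if_neg h]
      have h1 : ψ ^ n ≠ 1 := fun hc => h (hψ ▸ orderOf_dvd_iff_pow_eq_one.mpr hc)
      rw [MulChar.sum_eq_zero_of_ne_one h1]
      simp
  -- expand the fourth power and swap sums
  have key : (∑ x : ZMod p, (∑ i ∈ s, (ψ ^ i) x) ^ 4)
      = ∑ i ∈ s, ∑ j ∈ s, ∑ l ∈ s, ∑ m ∈ s,
          ∑ x : ZMod p, (ψ ^ (i + j + l + m)) x := by
    have hx : ∀ x : ZMod p, (∑ i ∈ s, (ψ ^ i) x) ^ 4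
        = ∑ i ∈ s, ∑ j ∈ s, ∑ l ∈ s, ∑ m ∈ s, (ψ ^ (i + j + l + m)) x := by
      intro x
      rw [show (4:ℕ) = 1+1+1+1 from rfl]
      simp only [pow_add, pow_one, Finset.sum_mul, Finset.mul_sum]
      refine Finset.sum_congr rfl fun i _ => Finset.sum_congr rfl fun j _ =>
        Finset.sum_congr rfl fun l _ => Finset.sum_congr rfl fun m _ => ?_
      simp only [MulChar.mul_apply]
      ring
    rw [Finset.sum_congr rfl fun x _ => hx x, Finset.sum_comm]
    refine Finset.sum_congr rfl fun i _ => ?_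
    rw [Finset.sum_comm]
    refine Finset.sum_congr rfl fun j _ => ?_
    rw [Finset.sum_comm]
    refine Finset.sum_congr rfl fun l _ => ?_
    rw [Finset.sum_comm]
  -- bound on the inner sum over m
  have hm : ∀ t : ℕ, (∑ m ∈ s, if k ∣ t + m then (p:ℝ) - 1 else 0) ≤ (p:ℝ) - 1 := by
    intro t
    classical
    rw [← Finset.sum_filter]
    rw [Finset.sum_const, nsmul_eq_mul]
    have hc1 : (s.filter fun m => k ∣ t + m).card ≤ 1 := by
      refine Finset.card_le_one.mpr fun a ha b hb => ?_
      simp only [Finset.mem_filter, hs, Finset.mem_Ico] at ha hb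
      obtain ⟨⟨ha1, ha2⟩, hda⟩ := ha
      obtain ⟨⟨hb1, hb2⟩, hdb⟩ := hb
      rcases le_total a b with hab | hab
      · have hd : k ∣ (t + b) - (t + a) := Nat.dvd_sub hdb hda
        have : (t + b) - (t + a) = b - a := by omega
        rw [this] at hd
        have := Nat.eq_zero_of_dvd_of_lt hd
        omega
      · have hd : k ∣ (t + a) - (t + b) := Nat.dvd_sub hda hdb
        have : (t + a) - (t + b) = a - b := by omega
        rw [this] at hd
        have := Nat.eq_zero_of_dvd_of_lt hd
        omega
    have hpp : (0:ℝ) ≤ (p:ℝ) - 1 := by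
      have : (2:ℝ) ≤ p := by exact_mod_cast hp
      linarith
    calc ((s.filter fun m => k ∣ t + m).card : ℝ) * ((p:ℝ) - 1)
        ≤ 1 * ((p:ℝ) - 1) := by
          apply mul_le_mul_of_nonneg_right _ hpp
          exact_mod_cast hc1
      _ = (p:ℝ) - 1 := one_mul _
  -- put it together
  rw [key]
  have step1 : ‖∑ i ∈ s, ∑ j ∈ s, ∑ l ∈ s, ∑ m ∈ s,
        ∑ x : ZMod p, (ψ ^ (i + j + l + m)) x‖
      ≤ ∑ i ∈ s, ∑ j ∈ s, ∑ l ∈ s, ((p:ℝ) - 1) := by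
    refine (norm_sum_le _ _).trans (Finset.sum_le_sum fun i _ => ?_)
    refine (norm_sum_le _ _).trans (Finset.sum_le_sum fun j _ => ?_)
    refine (norm_sum_le _ _).trans (Finset.sum_le_sum fun l _ => ?_)
    refine (norm_sum_le _ _).trans ?_
    calc (∑ m ∈ s, ‖∑ x : ZMod p, (ψ ^ (i + j + l + m)) x‖)
        = ∑ m ∈ s, if k ∣ (i + j + l) + m then (p:ℝ) - 1 else 0 := by
          refine Finset.sum_congr rfl fun m _ => ?_
          rw [hT]
      _ ≤ (p:ℝ) - 1 := hm _
  refine step1.trans ?_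
  have : (∑ i ∈ s, ∑ j ∈ s, ∑ l ∈ s, ((p:ℝ) - 1))
      = ((k:ℝ) - 1) ^ 3 * ((p:ℝ) - 1) := by
    simp only [Finset.sum_const, nsmul_eq_mul, hcard]
    have : ((k - 1 : ℕ) : ℝ) = (k:ℝ) - 1 := by
      rw [Nat.cast_sub (by omega : 1 ≤ k)]; norm_num
    rw [this]; ring
  rw [this]
  have hk1 : (0:ℝ) ≤ (k:ℝ) - 1 := by
    have : (2:ℝ) ≤ k := by exact_mod_cast hk
    linarith
  have hp1 : (1:ℝ) ≤ p := by
    have : (2:ℝ) ≤ p := by exact_mod_cast hp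
    linarith
  nlinarith [pow_nonneg hk1 3, mul_nonneg (pow_nonneg hk1 3) (by linarith : (0:ℝ) ≤ (p:ℝ))]
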